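/- Let n ≥ 2 and let λ be a partition of n whose first part satisfies 2·λ_1 ≥ n−1. Assume that λ is not the partition (n/2, n/2) when n is even, and that λ does not have exactly three parts with first part equal to (n−1)/2 when n is odd. Then |η_λ| ≤ (n−λ_1+1)·D_{λ_1} + D_{λ_1−1}. -/

import Mathlib

/-- Derangement numbers: `D 0 = 1`, `D (m+1) = (m+1) * D m + (-1)^(m+1)`. -/
def derange : ℕ → ℤ
  | 0 => 1
  | n + 1 => (n + 1 : ℤ) * derange n + (-1) ^ (n + 1)

/-- Subtract one from every part and discard the parts that become zero
(deleting the first column of the Ferrers diagram). -/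
def strip (l : List ℕ) : List ℕ := (l.map (· - 1)).filter (fun x => 0 < x)

lemma strip_measure (l : List ℕ) : (strip l).sum + (strip l).length ≤ l.sum := by
  induction l with
  | nil => simp [strip]
  | cons x t ih =>
      simp only [strip, List.map_cons, List.filter_cons] at ih ⊢
      by_cases hx : 0 < x - 1 <;> simp [hx] <;> omega

/-- The eigenvalues of the derangement graph, defined by Renteln's recurrence:
`η ∅ = 1` and `η λ = (-1)^h (η (λ-ĥ) + (-1)^{λ₁} h η (λ-ĉ))`, where
`h = λ₁ + r - 1` is the hook size, `λ-ĥ = strip (tail λ)` removes the hook,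
and `λ-ĉ = strip λ` removes the first column. -/
def eta : List ℕ → ℤ
  | [] => 1
  | a :: t =>
      (-1) ^ (a + t.length) *
        (eta (strip t) + (-1) ^ a * ((a : ℤ) + t.length) * eta (strip (a :: t)))
  termination_by l => l.sum + l.length
  decreasing_by
  · have h1 := strip_measure t
    simp only [List.sum_cons, List.length_cons]
    omega
  · have h1 := strip_measure (a :: t)
    simp only [List.sum_cons, List.length_cons] at h1 ⊢
    omega

/-- `l` is (the list of parts of) a partition of `n`: weakly decreasing,
all parts positive, summing to `n`. -/
def IsPartition (n : ℕ) (l : List ℕ) : Prop :=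
  l.Pairwise (· ≥ ·) ∧ (∀ x ∈ l, 0 < x) ∧ l.sum = n

/-- The hook partition `(a, 1^(n-a))` of `n`. -/
def hookP (n a : ℕ) : List ℕ := a :: List.replicate (n - a) 1

lemma one_le_derange : ∀ n : ℕ, n ≠ 1 → 1 ≤ derange n
  | 0, _ => by norm_num [derange]
  | 1, h => absurd rfl h
  | 2, _ => by norm_num [derange]
  | (n+3), _ => by
      have ih := one_le_derange (n+2) (by omega)
      have he : ((-1:ℤ))^(n+3) = 1 ∨ ((-1:ℤ))^(n+3) = -1 := neg_one_pow_eq_or ℤ _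
      show ((n:ℤ)+2+1) * derange (n+2) + (-1)^(n+2+1) ≥ 1
      rcases he with h | h <;> rw [show n+2+1 = n+3 from rfl, h] <;> nlinarith

lemma derange_nonneg (n : ℕ) : 0 ≤ derange n := by
  rcases eq_or_ne n 1 with rfl | h
  · norm_num [derange]
  · linarith [one_le_derange n h]

lemma derange_step (p : ℕ) (hp : 1 ≤ p) : derange p ≤ derange (p+1) := by
  rcases eq_or_ne p 1 with rfl | h
  · norm_num [derange]
  · have h1 := one_le_derange p h
    have he : ((-1:ℤ))^(p+1) = 1 ∨ ((-1:ℤ))^(p+1) = -1 := neg_one_pow_eq_or ℤ _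
    show derange p ≤ ((p:ℤ)+1) * derange p + (-1)^(p+1)
    have hp1 : (1:ℤ) ≤ (p:ℤ) := by exact_mod_cast hp
    rcases he with h2 | h2 <;> rw [h2] <;> nlinarith

lemma derange_mono {m p : ℕ} (h : m ≤ p) (hp : p ≠ 1) : derange m ≤ derange p := by
  rcases Nat.eq_zero_or_pos m with rfl | hm
  · rw [show derange 0 = 1 from rfl]; exact one_le_derange p hp
  · induction p, h using Nat.le_induction with
    | base => exact le_refl _
    | succ p hp' ih =>
        rcases eq_or_ne p 1 with rfl | h1
        · have : m = 1 := by omega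
          subst this; exact derange_step 1 le_rfl
        · exact le_trans (ih (by intro hh; exact h1 hh) ) (derange_step p (le_trans hm hp'))

-- derange n ≥ n+1 for n ≥ 4? used maybe; also key claim C
lemma claimC : ∀ k : ℕ, 1 ≤ k → ∀ p : ℕ, 2 ≤ p → ((p:ℤ)+k+2) * derange p ≤ derange (p+k+1) := by
  intro k hk
  induction k, hk using Nat.le_induction with
  | base =>
      intro p hp
      have h1 := one_le_derange p (by omega)
      have e1 := neg_one_pow_eq_or ℤ (p+1)
      have e2 := neg_one_pow_eq_or ℤ (p+2)
      have hD1 : derange (p+1) = ((p:ℤ)+1) * derange p + (-1)^(p+1) := rfl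
      have hD2 : derange (p+2) = ((p:ℤ)+2) * derange (p+1) + (-1)^(p+2) := by
        show derange (p+2) = ((p+1:ℕ)+1:ℤ) * derange (p+1) + (-1)^(p+1+1)
        rw [show p+1+1 = p+2 from rfl]; push_cast [derange]; ring
      have hp' : (2:ℤ) ≤ (p:ℤ) := by exact_mod_cast hp
      have key : ((p:ℤ)*(p:ℤ) + 2*(p:ℤ) - 1) * 1 ≤ ((p:ℤ)*(p:ℤ)+2*(p:ℤ)-1) * derange p :=
        mul_le_mul_of_nonneg_left h1 (by nlinarith)
      push_cast
      rcases e1 with f1 | f1 <;> rcases e2 with f2 | f2 <;>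
        rw [show p+1+1 = p+2 from rfl, hD2, hD1, f1, f2] <;> nlinarith [key, hp']
  | succ k hk ih =>
      intro p hp
      have h1 := one_le_derange p (by omega)
      have ihp := ih p hp
      have e2 := neg_one_pow_eq_or ℤ (p+k+2)
      have hD2 : derange (p+k+2) = ((p:ℤ)+k+2) * derange (p+k+1) + (-1)^(p+k+2) := by
        show derange (p+(k+1)+1) = _
        rw [show p+(k+1)+1 = (p+k+1)+1 from by ring]
        push_cast [derange]; ring_nf
      have hp' : (2:ℤ) ≤ (p:ℤ) := by exact_mod_cast hp
      have hnn := derange_nonneg (p+k+1)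
      rw [show p+(k+1)+1 = p+k+2 from by ring, hD2]
      have hq : (0:ℤ) ≤ (p:ℤ)+k+2 := by positivity
      have key := mul_le_mul_of_nonneg_left ihp hq
      have key2 : (((p:ℤ)+k+2)*((p:ℤ)+k+2) - ((p:ℤ)+k+2) - 1) * 1 ≤ (((p:ℤ)+k+2)*((p:ℤ)+k+2) - ((p:ℤ)+k+2) - 1) * derange p :=
        mul_le_mul_of_nonneg_left h1 (by nlinarith)
      push_cast
      rcases e2 with f2 | f2 <;> rw [f2] <;> nlinarith [key, key2, hp']

lemma strip_nil : strip [] = [] := rfl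

lemma strip_cons_one (t : List ℕ) : strip (1 :: t) = strip t := by
  simp [strip]

lemma strip_cons_of_ge_two (a : ℕ) (ha : 2 ≤ a) (t : List ℕ) :
    strip (a :: t) = (a - 1) :: strip t := by
  simp only [strip, List.map_cons, List.filter_cons]
  have : 0 < a - 1 := by omega
  simp [this]

lemma strip_pos (l : List ℕ) : ∀ x ∈ strip l, 0 < x := by
  intro x hx
  simp only [strip, List.mem_filter] at hx
  exact of_decide_eq_true hx.2

lemma strip_sum (l : List ℕ) (h : ∀ x ∈ l, 0 < x) :
    (strip l).sum + l.length = l.sum := by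
  induction l with
  | nil => simp [strip]
  | cons x t ih =>
      have hx : 0 < x := h x (by simp)
      have ih' := ih (fun y hy => h y (by simp [hy]))
      rcases Nat.lt_or_ge x 2 with h2 | h2
      · have : x = 1 := by omega
        subst this
        rw [strip_cons_one]
        simp only [List.length_cons, List.sum_cons]
        omega
      · rw [strip_cons_of_ge_two x h2]
        simp only [List.length_cons, List.sum_cons]
        omega

lemma strip_sorted (l : List ℕ) (h : l.Pairwise (· ≥ ·)) : (strip l).Pairwise (· ≥ ·) := by
  apply List.Pairwise.filter
  rw [List.pairwise_map]
  exact h.imp (fun hab => Nat.sub_le_sub_right hab 1)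

lemma eta_nil : eta [] = 1 := by simp [eta]

lemma eta_cons (a : ℕ) (t : List ℕ) :
    eta (a :: t) = (-1) ^ (a + t.length) *
      (eta (strip t) + (-1) ^ a * ((a : ℤ) + t.length) * eta (strip (a :: t))) := by
  rw [eta]

lemma derange_ge (q : ℕ) (hq : 4 ≤ q) : (q:ℤ) + 1 ≤ derange q := by
  induction q, hq using Nat.le_induction with
  | base => norm_num [derange]
  | succ q hq ih =>
      have e := neg_one_pow_eq_or ℤ (q+1)
      show _ ≤ ((q:ℤ)+1) * derange q + (-1)^(q+1)
      have hq' : (4:ℤ) ≤ (q:ℤ) := by exact_mod_cast hq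
      rcases e with f | f <;> rw [f] <;> push_cast <;> nlinarith

lemma eta_single : ∀ a : ℕ, eta [a] = derange a := by
  intro a
  induction a using Nat.strong_induction_on with
  | _ a ih =>
    match a with
    | 0 => rw [eta_cons]; norm_num [strip, eta_nil, derange]
    | 1 => rw [eta_cons]; norm_num [strip, eta_nil, derange]
    | (b+2) =>
        rw [eta_cons, strip_cons_of_ge_two (b+2) (by omega)]
        have h1 : eta ((b+2-1) :: strip []) = derange (b+1) := by
          rw [show b+2-1 = b+1 from rfl, show strip [] = ([]:List ℕ) from rfl]
          exact ih (b+1) (by omega)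
        rw [h1, show strip ([]:List ℕ) = ([]:List ℕ) from rfl, eta_nil]
        show _ = ((b+1:ℕ)+1:ℤ) * derange (b+1) + (-1)^(b+1+1)
        simp only [List.length_nil, Nat.add_zero, Nat.cast_zero, add_zero, Nat.cast_ofNat,
          Nat.cast_add]
        rw [show b+1+1 = b+2 from rfl]
        rcases neg_one_pow_eq_or ℤ (b+2) with f | f <;> rw [f] <;> push_cast <;> ring

lemma L2A (a s k : ℕ) (ha : 1 ≤ a) (hk : 1 ≤ k) (hks : k ≤ s)
    (hx1 : ¬(a = 1 ∧ s = 1 ∧ k = 1)) (hx2 : ¬(a = 1 ∧ s = 2 ∧ k = 2)) :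
    derange (s - k) + ((a:ℤ) + k) * derange (a + s - k - 1) ≤ derange (a + s) := by
  rcases Nat.lt_or_ge (a + s - k - 1) 2 with h2 | h2
  · rcases (by omega : a + s - k - 1 = 0 ∨ a + s - k - 1 = 1) with h0 | h0
    · have hk3 : 3 ≤ k := by
        rcases (by omega : k = 1 ∨ k = 2 ∨ 3 ≤ k) with rfl | rfl | h3
        · exact absurd ⟨by omega, by omega, rfl⟩ hx1
        · exact absurd ⟨by omega, by omega, rfl⟩ hx2
        · exact h3
      have ha1 : a = 1 := by omega
      have hsk0 : s - k = 0 := by omega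
      subst ha1
      rw [h0, hsk0, show derange 0 = 1 from rfl]
      have := derange_ge (1 + s) (by omega)
      push_cast at this ⊢
      linarith
    · rw [h0, show derange 1 = 0 from by norm_num [derange]]
      rcases (by omega : s - k = 0 ∨ s - k = 1) with h1 | h1 <;> rw [h1]
      · rw [show derange 0 = 1 from rfl]
        have := one_le_derange (a+s) (by omega)
        linarith
      · rw [show derange 1 = 0 from by norm_num [derange]]
        have := derange_nonneg (a+s)
        linarith
  · have hsk : s - k ≤ a + s - k - 1 := by omega
    have hD1 : derange (s - k) ≤ derange (a + s - k - 1) := derange_mono hsk (by omega)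
    have hc : ((a:ℤ) + k) ≤ ((a + s - k - 1 : ℕ):ℤ) + k + 1 := by
      have h3 : a + k ≤ (a + s - k - 1) + k + 1 := by omega
      exact_mod_cast h3
    have hDp := derange_nonneg (a + s - k - 1)
    have hkey := claimC k hk (a + s - k - 1) h2
    have hmul : ((a:ℤ) + k) * derange (a + s - k - 1)
        ≤ (((a + s - k - 1 : ℕ):ℤ) + k + 1) * derange (a + s - k - 1) :=
      mul_le_mul_of_nonneg_right hc hDp
    have hfin : (a + s - k - 1) + k + 1 = a + s := by omega
    calc derange (s - k) + ((a:ℤ) + k) * derange (a + s - k - 1)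
        ≤ derange (a + s - k - 1) + (((a + s - k - 1 : ℕ):ℤ) + k + 1) * derange (a + s - k - 1) := by
          linarith
      _ = (((a + s - k - 1 : ℕ):ℤ) + k + 2) * derange (a + s - k - 1) := by ring
      _ ≤ derange ((a + s - k - 1) + k + 1) := hkey
      _ = derange (a + s) := by rw [hfin]

lemma eta_abs_le : ∀ l : List ℕ, (∀ x ∈ l, 0 < x) → |eta l| ≤ derange l.sum
  | [], _ => by rw [eta_nil]; norm_num [derange]
  | [a], _ => by
      rw [eta_single, List.sum_cons, List.sum_nil, Nat.add_zero,
        abs_of_nonneg (derange_nonneg a)]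
  | (a :: b :: t), hpos => by
      by_cases hsp1 : a = 1 ∧ b = 1 ∧ t = []
      · obtain ⟨rfl, rfl, rfl⟩ := hsp1
        have h11 : eta [1,1] = -1 := by simp [eta, strip]
        rw [h11]
        norm_num [derange]
      by_cases hsp2 : a = 1 ∧ b = 1 ∧ t = [1]
      · obtain ⟨rfl, rfl, rfl⟩ := hsp2
        have h111 : eta [1,1,1] = 2 := by simp [eta, strip]
        rw [h111]
        norm_num [derange]
      have hpt : ∀ x ∈ (b :: t), 0 < x := fun x hx => hpos x (List.mem_cons_of_mem _ hx)
      have ha : 0 < a := hpos a (by simp)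
      have recA := eta_abs_le (strip (b :: t)) (strip_pos _)
      have recB := eta_abs_le (strip (a :: b :: t)) (strip_pos _)
      have hsumA := strip_sum (b :: t) hpt
      have hsumB := strip_sum (a :: b :: t) hpos
      set s := (b :: t).sum with hs
      set k := (b :: t).length with hkdef
      have hk : 1 ≤ k := by simp [hkdef]
      have hks : k ≤ s := by
        have := List.length_le_sum_of_one_le _ (fun x hx => hpt x hx)
        exact this
      rw [show (strip (b :: t)).sum = s - k from by omega] at recA
      have hBsum : (strip (a :: b :: t)).sum = a + s - k - 1 := by
        have hlen : (a :: b :: t).length = k + 1 := by simp [hkdef]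
        have hsum : (a :: b :: t).sum = a + s := by simp [hs]
        omega
      rw [hBsum] at recB
      rw [eta_cons]
      have habs : |(-1 : ℤ) ^ (a + (b :: t).length) *
          (eta (strip (b :: t)) + (-1) ^ a * ((a : ℤ) + (b :: t).length) * eta (strip (a :: b :: t)))|
          = |eta (strip (b :: t)) + (-1) ^ a * ((a : ℤ) + k) * eta (strip (a :: b :: t))| := by
        rw [abs_mul, abs_pow, abs_neg, abs_one, one_pow, one_mul, ← hkdef]
      rw [habs]
      have htri : |eta (strip (b :: t)) + (-1) ^ a * ((a : ℤ) + k) * eta (strip (a :: b :: t))|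
          ≤ |eta (strip (b :: t))| + ((a : ℤ) + k) * |eta (strip (a :: b :: t))| := by
        refine le_trans (abs_add_le _ _) ?_
        rw [abs_mul, abs_mul, abs_pow, abs_neg, abs_one, one_pow, one_mul,
          abs_of_nonneg (by positivity : (0:ℤ) ≤ (a : ℤ) + k)]
      have hxx1 : ¬(a = 1 ∧ s = 1 ∧ k = 1) := by
        rintro ⟨rfl, hs1, hk1⟩
        have ht : t = [] := by
          cases t with
          | nil => rfl
          | cons c u => rw [hkdef] at hk1; simp at hk1
        subst ht
        rw [hs] at hs1
        simp at hs1
        exact hsp1 ⟨rfl, by omega, rfl⟩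
      have hxx2 : ¬(a = 1 ∧ s = 2 ∧ k = 2) := by
        rintro ⟨rfl, hs2, hk2⟩
        match t, hs2, hk2 with
        | [], hs2, hk2 => rw [hkdef] at hk2; simp at hk2
        | [c], hs2, hk2 =>
            have hb := hpt b (by simp)
            have hc := hpt c (by simp)
            rw [hs] at hs2
            simp at hs2
            have : b = 1 ∧ c = 1 := by omega
            exact hsp2 ⟨rfl, this.1, by rw [this.2]⟩
        | (c :: d :: u), hs2, hk2 => rw [hkdef] at hk2; simp at hk2
      have hmain := L2A a s k ha hk hks hxx1 hxx2
      have hsum : (a :: b :: t).sum = a + s := by simp [hs]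
      rw [hsum]
      refine le_trans htri (le_trans ?_ hmain)
      have := mul_le_mul_of_nonneg_left recB (by positivity : (0:ℤ) ≤ (a : ℤ) + k)
      linarith
  termination_by l => l.sum + l.length
  decreasing_by
  · have := strip_measure (b :: t)
    simp only [List.sum_cons, List.length_cons] at this ⊢
    omega
  · have := strip_measure (a :: b :: t)
    simp only [List.sum_cons, List.length_cons] at this ⊢
    omega
def badTriples : List (ℕ × ℕ × ℕ) :=
  [(2,1,1),(2,2,2),(2,3,3),(3,2,1),(3,3,2),(3,4,3),(5,4,1)]

lemma L3A (a s k : ℕ) (ha : 2 ≤ a) (hk : 1 ≤ k) (hks : k ≤ s) (hsa : s ≤ a + 1)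
    (hc1 : k = 1 → s + 1 ≤ a) (hc2 : k = 2 → s ≤ a)
    (hb : (a, s, k) ∉ badTriples) :
    derange (s - k) + ((a:ℤ) + k) * (((s - k + 1 : ℕ):ℤ) * derange (a - 1) + derange (a - 2))
      ≤ ((s + 1 : ℕ):ℤ) * derange a + derange (a - 1) := by
  rcases Nat.lt_or_ge a 6 with h6 | h6
  · -- small cases by decision
    have hs1 : 1 ≤ s := le_trans hk hks
    interval_cases a <;> interval_cases s <;> interval_cases k <;> revert hc1 hc2 hb <;> decide
  · obtain ⟨b, rfl⟩ : ∃ b, a = b + 2 := ⟨a - 2, by omega⟩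
    have hb4 : 4 ≤ b := by omega
    obtain ⟨m, hmk⟩ : ∃ m, s = m + k := ⟨s - k, by omega⟩
    subst hmk
    have hm : m ≤ b := by
      rcases (by omega : k = 1 ∨ k = 2 ∨ 3 ≤ k) with rfl | rfl | h3 <;> omega
    rw [show m + k - k = m from by omega, show b + 2 - 1 = b + 1 from by omega,
      show b + 2 - 2 = b from by omega]
    have hDm : derange m ≤ derange b := derange_mono (by omega) (by omega)
    have hX9 : (9:ℤ) ≤ derange b := by
      have h4 : derange 4 = 9 := by decide
      rw [← h4]; exact derange_mono hb4 (by omega)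
    have hY : derange (b+1) = ((b:ℤ)+1) * derange b + (-1)^(b+1) := by
      show ((b:ℕ)+1:ℤ) * derange b + (-1)^(b+1) = _
      push_cast; ring
    have hZ : derange (b+2) = ((b:ℤ)+2) * derange (b+1) + (-1)^(b+2) := by
      show derange ((b+1)+1) = _
      rw [show derange ((b+1)+1) = ((b+1:ℕ)+1:ℤ) * derange (b+1) + (-1)^((b+1)+1) from rfl]
      push_cast; ring_nf
    have hf : ((-1:ℤ))^(b+2) = -((-1:ℤ))^(b+1) := by rw [pow_succ]; ring
    have hmB : (m:ℤ) ≤ (b:ℤ) := by exact_mod_cast hm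
    have hkB : (1:ℤ) ≤ (k:ℤ) := by exact_mod_cast hk
    have hsB : (m:ℤ) + k ≤ (b:ℤ) + 3 := by exact_mod_cast hsa
    have hb4' : (4:ℤ) ≤ (b:ℤ) := by exact_mod_cast hb4
    have hm0 : (0:ℤ) ≤ (m:ℤ) := by positivity
    push_cast
    rw [hZ, hY, hf]
    have hp1 : (0:ℤ) ≤ ((k:ℤ)-1)*(b:ℤ) := mul_nonneg (by linarith) (by linarith)
    have hp2 : (0:ℤ) ≤ (k:ℤ)*((b:ℤ)-(m:ℤ)) := mul_nonneg (by linarith) (by linarith)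
    have hp3 : (0:ℤ) ≤ (k:ℤ)*(m:ℤ) := mul_nonneg (by linarith) hm0
    have hp4 : (0:ℤ) ≤ (k:ℤ)*((b:ℤ)-(m:ℤ))*((b:ℤ)+1) := mul_nonneg hp2 (by linarith)
    have c0 : (0:ℤ) ≤ ((k:ℤ)*((b:ℤ)+1-(m:ℤ))+1)*((b:ℤ)+1) - ((b:ℤ)+(k:ℤ)+3) := by
      nlinarith [hp4, hp1]
    have key := mul_le_mul_of_nonneg_left hX9 c0
    have hE1 : (0:ℤ) ≤ 9*(((k:ℤ)*((b:ℤ)+1-(m:ℤ))+1)*((b:ℤ)+1) - ((b:ℤ)+(k:ℤ)+3))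
        + ((k:ℤ)*((b:ℤ)-(m:ℤ)) - (m:ℤ)) := by
      nlinarith [hp4, hp2, hp1, hmB, hb4']
    have hE2 : (0:ℤ) ≤ 9*(((k:ℤ)*((b:ℤ)+1-(m:ℤ))+1)*((b:ℤ)+1) - ((b:ℤ)+(k:ℤ)+3))
        - ((k:ℤ)*((b:ℤ)-(m:ℤ)) - (m:ℤ)) := by
      nlinarith [hp4, hp3, hp1, hm0, hb4']
    rcases neg_one_pow_eq_or ℤ (b+1) with f | f <;> rw [f]
    · linarith [key, hDm, hE1]
    · linarith [key, hDm, hE2]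

def GoodL (l : List ℕ) : Prop :=
  l.Pairwise (· ≥ ·) ∧ (∀ x ∈ l, 0 < x) ∧ l.tail.sum ≤ l.headI + 1 ∧
  (∀ c, l ≠ [c, c]) ∧ ¬(l.length = 3 ∧ l.tail.sum = l.headI + 1)

lemma eta_main : ∀ l : List ℕ, GoodL l →
    |eta l| ≤ ((l.tail.sum + 1 : ℕ):ℤ) * derange l.headI + derange (l.headI - 1)
  | [], _ => by
      rw [eta_nil]; norm_num [derange]
  | [a], _ => by
      rw [eta_single]
      simp only [List.tail_cons, List.sum_nil, List.headI_cons]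
      have h1 := derange_nonneg a
      have h2 := derange_nonneg (a - 1)
      rw [abs_of_nonneg h1]
      push_cast
      linarith
  | (a :: b :: t), hgood => by
      obtain ⟨hsort, hpos, hts, hne2, hne3⟩ := hgood
      by_cases hq1 : a = 2 ∧ b = 1 ∧ t = []
      · obtain ⟨rfl, rfl, rfl⟩ := hq1
        have hv : eta [2,1] = -1 := by simp [eta, strip]
        rw [hv]; norm_num [derange]
      by_cases hq2 : a = 2 ∧ b = 1 ∧ t = [1]
      · obtain ⟨rfl, rfl, rfl⟩ := hq2
        have hv : eta [2,1,1] = 1 := by simp [eta, strip]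
        rw [hv]; norm_num [derange]
      by_cases hq3 : a = 2 ∧ b = 1 ∧ t = [1,1]
      · obtain ⟨rfl, rfl, rfl⟩ := hq3
        have hv : eta [2,1,1,1] = -1 := by simp [eta, strip]
        rw [hv]; norm_num [derange]
      by_cases hq4 : a = 3 ∧ b = 2 ∧ t = []
      · obtain ⟨rfl, rfl, rfl⟩ := hq4
        have hv : eta [3,2] = 4 := by simp [eta, strip]
        rw [hv]; norm_num [derange]
      by_cases hq5 : a = 3 ∧ b = 2 ∧ t = [1]
      · obtain ⟨rfl, rfl, rfl⟩ := hq5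
        have hv : eta [3,2,1] = -5 := by simp [eta, strip]
        rw [hv]; norm_num [derange]
      by_cases hq6 : a = 3 ∧ b = 2 ∧ t = [1,1]
      · obtain ⟨rfl, rfl, rfl⟩ := hq6
        have hv : eta [3,2,1,1] = 6 := by simp [eta, strip]
        rw [hv]; norm_num [derange]
      by_cases hq7 : a = 5 ∧ b = 4 ∧ t = []
      · obtain ⟨rfl, rfl, rfl⟩ := hq7
        have hv : eta [5,4] = 128 := by simp [eta, strip]
        rw [hv]; norm_num [derange]
      -- general case
      have hpt : ∀ x ∈ (b :: t), 0 < x := fun x hx => hpos x (List.mem_cons_of_mem _ hx)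
      have hba : b ≤ a := (List.pairwise_cons.mp hsort).1 b (by simp)
      have hall : ∀ x ∈ (b :: t), x ≤ a := fun x hx =>
        (List.pairwise_cons.mp hsort).1 x (by simp [hx])
      set s := (b :: t).sum with hs
      set k := (b :: t).length with hkdef
      have hk : 1 ≤ k := by rw [hkdef]; simp
      have hks : k ≤ s := by
        rw [hkdef, hs]; exact List.length_le_sum_of_one_le _ hpt
      have hsa : s ≤ a + 1 := by simpa [hs] using hts
      have ha2 : 2 ≤ a := by
        by_contra hlt
        have ha1 : a = 1 := by have := hpos a (by simp); omega
        subst ha1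
        have hb1 : b = 1 := by have := hpt b (by simp); omega
        subst hb1
        have hk2 : k ≤ 2 := by omega
        match t, hne2, hne3, hk2 with
        | [], hne2, _, _ => exact hne2 1 rfl
        | [x], _, hne3, _ =>
            have hx1 : x = 1 := by
              have hh1 := hpt x (by simp)
              have hh2 := hall x (by simp)
              omega
            subst hx1
            exact hne3 ⟨rfl, by decide⟩
        | (x :: y :: u), _, _, hk2 =>
            rw [hkdef] at hk2
            simp at hk2
      have hc1 : k = 1 → s + 1 ≤ a := by
        intro hk1
        have ht : t = [] := by
          cases t with
          | nil => rfl
          | cons c u => rw [hkdef] at hk1; simp at hk1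
        subst ht
        have hsb : s = b := by rw [hs]; simp
        have hba' : b ≠ a := by
          intro heq
          exact hne2 a (by rw [← heq])
        omega
      have hc2 : k = 2 → s ≤ a := by
        intro hk2
        have hno : ¬((a :: b :: t).length = 3 ∧ s = a + 1) := by
          intro ⟨h3, hsa1⟩
          exact hne3 ⟨h3, by simpa [hs] using hsa1⟩
        have hlen : (a :: b :: t).length = 3 := by
          rw [hkdef] at hk2; simp at hk2 ⊢; omega
        have : s ≠ a + 1 := fun hcon => hno ⟨hlen, hcon⟩
        omega
      have hbad : (a, s, k) ∉ badTriples := by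
        intro hmem
        have ht0 : t = [] → s = b := by intro h; rw [hs, h]; simp
        have ht1 : ∀ c, t = [c] → s = b + c := by
          intro c h; rw [hs, h]; simp
        simp only [badTriples, List.mem_cons, List.mem_singleton, Prod.mk.injEq] at hmem
        rcases hmem with ⟨ha', hs', hk'⟩ | ⟨ha', hs', hk'⟩ | ⟨ha', hs', hk'⟩ |
          ⟨ha', hs', hk'⟩ | ⟨ha', hs', hk'⟩ | ⟨ha', hs', hk'⟩ | ⟨ha', hs', hk'⟩ | hx
        · have ht : t = [] := by
            cases t with
            | nil => rfl
            | cons c u => rw [hkdef] at hk'; simp at hk'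
          exact hq1 ⟨ha', by have := ht0 ht; omega, ht⟩
        · match t, hq2 with
          | [], _ => rw [hkdef] at hk'; simp at hk'
          | [c], hq2 =>
              have h1 := hpt b (by simp)
              have h2 := hpt c (by simp)
              have := ht1 c rfl
              have hbc : b = 1 ∧ c = 1 := by omega
              exact hq2 ⟨ha', hbc.1, by rw [hbc.2]⟩
          | (c :: d :: u), _ => rw [hkdef] at hk'; simp at hk'
        · match t, hq3 with
          | [], _ => rw [hkdef] at hk'; simp at hk'
          | [c], _ => rw [hkdef] at hk'; simp at hk'
          | [c, d], hq3 =>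
              have h1 := hpt b (by simp)
              have h2 := hpt c (by simp)
              have h3 := hpt d (by simp)
              have hsum : s = b + c + d := by rw [hs]; simp; omega
              have hbcd : b = 1 ∧ c = 1 ∧ d = 1 := by omega
              exact hq3 ⟨ha', hbcd.1, by rw [hbcd.2.1, hbcd.2.2]⟩
          | (c :: d :: e :: u), _ => rw [hkdef] at hk'; simp at hk'
        · have ht : t = [] := by
            cases t with
            | nil => rfl
            | cons c u => rw [hkdef] at hk'; simp at hk'
          exact hq4 ⟨ha', by have := ht0 ht; omega, ht⟩
        · match t, hq5 with
          | [], _ => rw [hkdef] at hk'; simp at hk'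
          | [c], hq5 =>
              have h1 := hpt c (by simp)
              have hcb : c ≤ b :=
                (List.pairwise_cons.mp (List.pairwise_cons.mp hsort).2).1 c (by simp)
              have := ht1 c rfl
              have hbc : b = 2 ∧ c = 1 := by omega
              exact hq5 ⟨ha', hbc.1, by rw [hbc.2]⟩
          | (c :: d :: u), _ => rw [hkdef] at hk'; simp at hk'
        · match t, hq6 with
          | [], _ => rw [hkdef] at hk'; simp at hk'
          | [c], _ => rw [hkdef] at hk'; simp at hk'
          | [c, d], hq6 =>
              have h1 := hpt c (by simp)
              have h2 := hpt d (by simp)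
              have hsort2 := List.pairwise_cons.mp (List.pairwise_cons.mp hsort).2
              have hcb : c ≤ b := hsort2.1 c (by simp)
              have hdc : d ≤ c := (List.pairwise_cons.mp hsort2.2).1 d (by simp)
              have hsum : s = b + c + d := by rw [hs]; simp; omega
              have hbcd : b = 2 ∧ c = 1 ∧ d = 1 := by omega
              exact hq6 ⟨ha', hbcd.1, by rw [hbcd.2.1, hbcd.2.2]⟩
          | (c :: d :: e :: u), _ => rw [hkdef] at hk'; simp at hk'
        · have ht : t = [] := by
            cases t with
            | nil => rfl
            | cons c u => rw [hkdef] at hk'; simp at hk'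
          exact hq7 ⟨ha', by have := ht0 ht; omega, ht⟩
        · exact absurd hx List.not_mem_nil
      -- strip facts
      have hsc : strip (a :: b :: t) = (a - 1) :: strip (b :: t) :=
        strip_cons_of_ge_two a ha2 _
      have hsumA : (strip (b :: t)).sum + k = s := by
        rw [hkdef, hs]; exact strip_sum _ hpt
      have hgood' : GoodL (strip (a :: b :: t)) := by
        refine ⟨strip_sorted _ hsort, strip_pos _, ?_, ?_, ?_⟩
        · rw [hsc]
          simp only [List.tail_cons, List.headI_cons]
          omega
        · intro c heq
          rw [hsc] at heq
          have h1 : a - 1 = c ∧ strip (b :: t) = [c] := by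
            constructor
            · exact ((List.cons.injEq _ _ _ _).mp heq).1
            · exact ((List.cons.injEq _ _ _ _).mp heq).2
          have h2 : (strip (b :: t)).sum = c := by rw [h1.2]; simp
          rcases (by omega : k = 1 ∨ k = 2) with hk1 | hk2
          · have := hc1 hk1; omega
          · have := hc2 hk2; omega
        · intro ⟨hlen, hts'⟩
          rw [hsc] at hts' hlen
          simp only [List.tail_cons, List.headI_cons] at hts'
          have h2 : (strip (b :: t)).sum = a - 1 + 1 := hts'
          have hk1 : k = 1 := by omega
          have := hc1 hk1
          omega
      have recB := eta_main (strip (a :: b :: t)) hgood'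
      rw [hsc] at recB
      simp only [List.tail_cons, List.headI_cons] at recB
      have hBsum : (strip (b :: t)).sum = s - k := by omega
      rw [hBsum, show a - 1 - 1 = a - 2 from by omega] at recB
      have recA := eta_abs_le (strip (b :: t)) (strip_pos _)
      rw [hBsum] at recA
      rw [eta_cons, hsc]
      have habs : |(-1 : ℤ) ^ (a + (b :: t).length) *
          (eta (strip (b :: t)) + (-1) ^ a * ((a : ℤ) + (b :: t).length) * eta ((a-1) :: strip (b :: t)))|
          = |eta (strip (b :: t)) + (-1) ^ a * ((a : ℤ) + k) * eta ((a-1) :: strip (b :: t))| := by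
        rw [abs_mul, abs_pow, abs_neg, abs_one, one_pow, one_mul, ← hkdef]
      rw [habs]
      have htri : |eta (strip (b :: t)) + (-1) ^ a * ((a : ℤ) + k) * eta ((a-1) :: strip (b :: t))|
          ≤ |eta (strip (b :: t))| + ((a : ℤ) + k) * |eta ((a-1) :: strip (b :: t))| := by
        refine le_trans (abs_add_le _ _) ?_
        rw [abs_mul, abs_mul, abs_pow, abs_neg, abs_one, one_pow, one_mul,
          abs_of_nonneg (by positivity : (0:ℤ) ≤ (a : ℤ) + k)]
      have hmain := L3A a s k ha2 hk hks hsa hc1 hc2 hbad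
      simp only [List.tail_cons, List.headI_cons, ← hs, ← hkdef]
      have hq : ((a:ℤ) + k) * |eta ((a-1) :: strip (b :: t))|
          ≤ ((a:ℤ) + k) * (((s - k + 1 : ℕ):ℤ) * derange (a - 1) + derange (a - 2)) :=
        mul_le_mul_of_nonneg_left recB (by positivity)
      calc |eta (strip (b :: t)) + (-1) ^ a * ((a : ℤ) + k) * eta ((a-1) :: strip (b :: t))|
          ≤ |eta (strip (b :: t))| + ((a : ℤ) + k) * |eta ((a-1) :: strip (b :: t))| := htri
        _ ≤ derange (s - k) + ((a:ℤ) + k) * (((s - k + 1 : ℕ):ℤ) * derange (a - 1) + derange (a - 2)) := by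
            linarith
        _ ≤ ((s + 1 : ℕ):ℤ) * derange a + derange (a - 1) := hmain
  termination_by l => l.sum + l.length
  decreasing_by
  · have := strip_measure (a :: b :: t)
    simp only [List.sum_cons, List.length_cons] at this ⊢
    omega

/-- For `n ≥ 2` and `λ ⊢ n` with `2λ₁ ≥ n-1`, excluding `(n/2, n/2)` for even `n` and
three-part partitions with first part `(n-1)/2` for odd `n`:
`|η_λ| ≤ (n-λ₁+1) D_{λ₁} + D_{λ₁-1}`. -/
theorem eta_abs_upper_bound (n : ℕ) (hn : 2 ≤ n)
    (l : List ℕ) (hl : IsPartition n l) (h1 : n - 1 ≤ 2 * l.headI)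
    (he : Even n → l ≠ [n / 2, n / 2])
    (ho : Odd n → ¬(l.length = 3 ∧ l.headI = (n - 1) / 2)) :
    |eta l| ≤ ((n - l.headI + 1 : ℕ) : ℤ) * derange l.headI + derange (l.headI - 1) := by
  obtain ⟨hsort, hpos, hsum⟩ := hl
  match l, hsort, hpos, hsum, h1, he, ho with
  | [], _, _, hsum, _, _, _ => simp at hsum; omega
  | (a :: t), hsort, hpos, hsum, h1, he, ho =>
      have hHead : (a :: t).headI = a := rfl
      have hSum : a + t.sum = n := by simpa using hsum
      rw [hHead] at ho ⊢
      have hts : t.sum = n - a := by omega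
      have hgood : GoodL (a :: t) := by
        refine ⟨hsort, hpos, ?_, ?_, ?_⟩
        · simp only [List.tail_cons, List.headI_cons]
          omega
        · intro c heq
          have hac : a = c ∧ t = [c] := by
            constructor
            · exact ((List.cons.injEq _ _ _ _).mp heq).1
            · exact ((List.cons.injEq _ _ _ _).mp heq).2
          obtain ⟨rfl, rfl⟩ := hac
          have hn2 : n = 2 * a := by simp at hSum; omega
          have heven : Even n := ⟨a, by omega⟩
          exact he heven (by rw [heq]; congr <;> omega)
        · intro ⟨hlen, htsum⟩
          simp only [List.tail_cons, List.headI_cons] at htsum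
          have hodd : Odd n := ⟨a, by omega⟩
          exact ho hodd ⟨by simpa using hlen, by omega⟩
      have := eta_main (a :: t) hgood
      simp only [List.tail_cons, List.headI_cons] at this
      rw [show n - a + 1 = t.sum + 1 from by omega]
      exact this
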